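/- arXiv:2601.05153 — 4 statements merged into one kernel-verified Lean document; each statement's English description precedes it below -/
import Mathlib

section
/- Fix s ∈ (0,1) and f ∈ W^{1,1}(R^n) ∩ W^{1,∞}(R^n). For a.e. ξ ∈ S^{n−1}, the gauge of the s-fractional L^p polar projection body converges as p → ∞ to the gauge of the s-fractional L^∞ polar projection body: lim_{p→∞} (p(1−s) ∫_0^∞ t^{−sp−1} ∫_{R^n} |f(x+tξ)−f(x)|^p dx dt)^{1/(sp)} = (sup_{x,t>0} t^{−s}|f(x+tξ)−f(x)|)^{1/s}. -/
open MeasureTheory Set NNReal ENNReal Filter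

private lemma frac_alg_low {s t m' : ℝ} (ht : 0 < t) (hm' : 0 ≤ m') (p : ℝ) :
    t ^ (-s * p - 1) * (m' * t ^ s) ^ p = m' ^ p * t⁻¹ := by
  rw [Real.mul_rpow hm' (Real.rpow_pos_of_pos ht s).le, ← Real.rpow_mul ht.le,
    mul_comm (m' ^ p) (t ^ (s*p)), ← mul_assoc, ← Real.rpow_add ht, ← Real.rpow_neg_one t]
  rw [show -s * p - 1 + s * p = -1 by ring]
  ring

private lemma frac_alg_up {s t M : ℝ} (ht : 0 < t) (hM : 0 ≤ M) (p : ℝ) :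
    t ^ (-s * p - 1) * (M * t ^ s) ^ (p - 1) = M ^ (p - 1) * t ^ (-s - 1) := by
  rw [Real.mul_rpow hM (Real.rpow_pos_of_pos ht s).le, ← Real.rpow_mul ht.le,
    mul_comm (M ^ (p-1)) (t ^ (s*(p-1))), ← mul_assoc, ← Real.rpow_add ht]
  rw [show -s * p - 1 + s * (p - 1) = -s - 1 by ring]
  ring

private lemma frac_inner_limit {s : ℝ} (hs0 : 0 < s) (hs1 : s < 1) (a : ℝ) (d k : ℝ) :
    Tendsto (fun p : ℝ =>
        (1 / (s * p)) * (Real.log (p * (1 - s)) + ((p + d) * Real.log a + Real.log k)))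
      atTop (nhds (Real.log a / s)) := by
  have hlog : Tendsto (fun p : ℝ => Real.log p / p) atTop (nhds 0) :=
    Real.isLittleO_log_id_atTop.tendsto_div_nhds_zero
  have hinv : Tendsto (fun p : ℝ => (s * p)⁻¹) atTop (nhds 0) := by
    apply Tendsto.inv_tendsto_atTop
    exact Tendsto.const_mul_atTop hs0 tendsto_id
  have h1 : Tendsto (fun p : ℝ => (1 / (s * p)) * Real.log (p * (1 - s))) atTop (nhds 0) := by
    have heq : ∀ᶠ p : ℝ in atTop, (1 / (s * p)) * Real.log (p * (1 - s))
        = (1/s) * (Real.log p / p) + Real.log (1 - s) * (s * p)⁻¹ := by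
      filter_upwards [eventually_gt_atTop 0] with p hp
      rw [Real.log_mul (ne_of_gt hp) (by linarith)]
      field_simp
    rw [tendsto_congr' heq]
    have := ((hlog.const_mul (1/s)).add (hinv.const_mul (Real.log (1-s))))
    simpa [mul_comm] using this
  have h3 : Tendsto (fun p : ℝ => (1 / (s * p)) * Real.log k) atTop (nhds 0) := by
    have := hinv.mul_const (Real.log k)
    simp only [one_div]
    simpa [mul_comm] using this
  have h2 : Tendsto (fun p : ℝ => (1 / (s * p)) * ((p + d) * Real.log a)) atTop
      (nhds (Real.log a / s)) := by
    have hq : Tendsto (fun p : ℝ => (1 + d * p⁻¹) * (Real.log a / s)) atTop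
        (nhds (Real.log a / s)) := by
      have h0 : Tendsto (fun p : ℝ => 1 + d * p⁻¹) atTop (nhds 1) := by
        have := (tendsto_inv_atTop_zero.const_mul d).const_add (1:ℝ)
        simpa using this
      simpa using h0.mul_const (Real.log a / s)
    apply hq.congr'
    filter_upwards [eventually_gt_atTop 0] with p hp
    have hp0 : p ≠ 0 := ne_of_gt hp
    field_simp
  have := h1.add (h2.add h3)
  simp only [zero_add, add_zero] at this
  apply this.congr
  intro p
  ring

private lemma frac_real_limit {s : ℝ} (hs0 : 0 < s) (hs1 : s < 1) {a : ℝ} (ha : 0 < a)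
    (d : ℝ) {k : ℝ} (hk : 0 < k) :
    Tendsto (fun p : ℝ => (p * (1 - s) * (a ^ (p + d) * k)) ^ (1 / (s * p)))
      atTop (nhds (a ^ (1 / s))) := by
  have key := (Real.continuous_exp.continuousAt.tendsto).comp (frac_inner_limit hs0 hs1 a d k)
  rw [Real.rpow_def_of_pos ha (1/s)]
  have hxy : Real.log a * (1/s) = Real.log a / s := by ring
  rw [hxy]
  apply key.congr'
  filter_upwards [eventually_gt_atTop 0] with p hp
  have h1s : (0:ℝ) < 1 - s := by linarith
  have hb1 : 0 < p * (1 - s) := by positivity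
  have hb2 : 0 < a ^ (p + d) := Real.rpow_pos_of_pos ha _
  have hbase : 0 < p * (1 - s) * (a ^ (p + d) * k) := by positivity
  simp only [Function.comp]
  rw [Real.rpow_def_of_pos hbase, Real.log_mul (ne_of_gt hb1) (by positivity),
    Real.log_mul (ne_of_gt hb2) (ne_of_gt hk), Real.log_rpow ha]
  ring_nf

private lemma frac_ennreal_limit {s : ℝ} (hs0 : 0 < s) (hs1 : s < 1) {a : ℝ} (ha : 0 < a)
    (d : ℝ) {K : ℝ≥0∞} (hK0 : K ≠ 0) (hKt : K ≠ ⊤) :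
    Tendsto (fun p : ℝ =>
        (ENNReal.ofReal (p * (1 - s)) * (ENNReal.ofReal (a ^ (p + d)) * K)) ^ (1 / (s * p)))
      atTop (nhds (ENNReal.ofReal a ^ (1 / s))) := by
  set k := K.toReal with hk
  have hkpos : 0 < k := ENNReal.toReal_pos hK0 hKt
  have hKk : K = ENNReal.ofReal k := by rw [hk, ENNReal.ofReal_toReal hKt]
  have hreal := frac_real_limit hs0 hs1 ha d hkpos
  have hcomp := (ENNReal.continuous_ofReal.continuousAt.tendsto).comp hreal
  rw [ENNReal.ofReal_rpow_of_pos ha]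
  apply hcomp.congr'
  filter_upwards [eventually_gt_atTop 0] with p hp
  have h1s : (0:ℝ) < 1 - s := by linarith
  have hb1 : 0 < p * (1 - s) := by positivity
  have hb2 : 0 < a ^ (p + d) := Real.rpow_pos_of_pos ha _
  simp only [Function.comp]
  rw [hKk, ← ENNReal.ofReal_mul hb2.le, ← ENNReal.ofReal_mul hb1.le,
    ENNReal.ofReal_rpow_of_pos (by positivity)]

/-- Fix `s ∈ (0,1)` and `f ∈ W^{1,1}(ℝⁿ) ∩ W^{1,∞}(ℝⁿ)`. For those unit
vectors `ξ` with `∫_0^∞ t^{−s−1} ∫ |f(x+tξ)−f(x)| dx dt < ∞` (which is a.e. `ξ ∈ S^{n−1}`),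
the gauge of the `s`-fractional `L^p` polar projection body converges as `p → ∞` to the
gauge of the `s`-fractional `L^∞` polar projection body:
`lim_{p→∞} (p(1−s) ∫_0^∞ t^{−sp−1} ∫ |f(x+tξ)−f(x)|^p dx dt)^{1/(sp)}
  = (sup_{x,t>0} t^{−s}|f(x+tξ)−f(x)|)^{1/s}`. -/
theorem fractional_gauge_tendsto_linfty {n : ℕ}
    (f : EuclideanSpace ℝ (Fin n) → ℝ) (L : ℝ≥0)
    (hf1 : Integrable f) (hlip : LipschitzWith L f) (hd : Differentiable ℝ f)
    (hg1 : Integrable (fun x => fderiv ℝ f x))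
    (s : ℝ) (hs : s ∈ Ioo (0:ℝ) 1)
    (ξ : EuclideanSpace ℝ (Fin n)) (hξ : ‖ξ‖ = 1)
    (hfin : (∫⁻ t in Ioi (0:ℝ), ENNReal.ofReal (t ^ (-s - 1)) *
        ∫⁻ x, ENNReal.ofReal |f (x + t • ξ) - f x|) ≠ ⊤) :
    Tendsto
      (fun p : ℝ =>
        (ENNReal.ofReal (p * (1 - s)) *
            ∫⁻ t in Ioi (0:ℝ), ENNReal.ofReal (t ^ (-s * p - 1)) *
              ∫⁻ x, ENNReal.ofReal (|f (x + t • ξ) - f x| ^ p)) ^ (1 / (s * p)))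
      atTop
      (nhds ((⨆ (x : EuclideanSpace ℝ (Fin n)) (t : {t : ℝ // 0 < t}),
          ENNReal.ofReal ((t : ℝ) ^ (-s) * |f (x + (t : ℝ) • ξ) - f x|)) ^ (1 / s))) := by
  obtain ⟨hs0, hs1⟩ := hs
  set Msup : ℝ≥0∞ := ⨆ (x : EuclideanSpace ℝ (Fin n)) (t : {t : ℝ // 0 < t}),
      ENNReal.ofReal ((t : ℝ) ^ (-s) * |f (x + (t : ℝ) • ξ) - f x|) with hMsup
  set C : ℝ≥0∞ := ∫⁻ t in Ioi (0:ℝ), ENNReal.ofReal (t ^ (-s - 1)) *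
      ∫⁻ x, ENNReal.ofReal |f (x + t • ξ) - f x| with hCdef
  set I : ℝ → ℝ≥0∞ := fun p => ∫⁻ t in Ioi (0:ℝ), ENNReal.ofReal (t ^ (-s * p - 1)) *
      ∫⁻ x, ENNReal.ofReal (|f (x + t • ξ) - f x| ^ p) with hIdef
  set F : ℝ → ℝ≥0∞ := fun p =>
      (ENNReal.ofReal (p * (1 - s)) * I p) ^ (1 / (s * p)) with hFdef
  -- Part 1: liminf lower bound
  have hliminf : Msup ^ (1/s) ≤ atTop.liminf F := by
    apply le_of_forall_lt
    intro b hb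
    have hbs : b ^ s < Msup := by
      have h := ENNReal.rpow_lt_rpow hb hs0
      rwa [← ENNReal.rpow_mul, one_div, inv_mul_cancel₀ (ne_of_gt hs0),
        ENNReal.rpow_one] at h
    rw [hMsup, lt_iSup_iff] at hbs
    obtain ⟨x0, hbs⟩ := hbs
    rw [lt_iSup_iff] at hbs
    obtain ⟨⟨t0, ht0⟩, hbs⟩ := hbs
    set m : ℝ := t0 ^ (-s) * |f (x0 + t0 • ξ) - f x0| with hmdef
    have hbtop : b ^ s ≠ ⊤ := ne_top_of_lt hbs
    have hm : (b ^ s).toReal < m := (ENNReal.lt_ofReal_iff_toReal_lt hbtop).1 hbs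
    have hmpos : 0 < m := lt_of_le_of_lt ENNReal.toReal_nonneg hm
    set r : ℝ := max (b ^ s).toReal (m / 2) with hrdef
    have hrm : r < m := max_lt hm (by linarith)
    set m' : ℝ := (r + m) / 2 with hm'def
    have hrm' : r < m' := by rw [hm'def]; linarith
    have hm'm : m' < m := by rw [hm'def]; linarith
    have hm'pos : 0 < m' :=
      lt_of_lt_of_le (by linarith : (0:ℝ) < m / 2) (le_trans (le_max_right _ _) hrm'.le)
    have hbm' : b ^ s < ENNReal.ofReal m' :=
      (ENNReal.lt_ofReal_iff_toReal_lt hbtop).2 (lt_of_le_of_lt (le_max_left _ _) hrm')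
    -- continuity at (x0, t0)
    have hφ : ContinuousAt (fun q : EuclideanSpace ℝ (Fin n) × ℝ => q.2 ^ (-s) * |f (q.1 + q.2 • ξ) - f q.1|)
        (x0, t0) := by
      apply ContinuousAt.mul
      · exact ContinuousAt.comp (f := Prod.snd) (x := (x0, t0))
          (Real.continuousAt_rpow_const t0 (-s) (Or.inl (ne_of_gt ht0)))
          continuousAt_snd
      · have hc : Continuous fun q : EuclideanSpace ℝ (Fin n) × ℝ => |f (q.1 + q.2 • ξ) - f q.1| := by
          apply Continuous.abs
          apply Continuous.sub
          · exact hlip.continuous.comp (continuous_fst.add (continuous_snd.smul continuous_const))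
          · exact hlip.continuous.comp continuous_fst
        exact hc.continuousAt
    have hev : ∀ᶠ q : EuclideanSpace ℝ (Fin n) × ℝ in nhds (x0, t0),
        m' < q.2 ^ (-s) * |f (q.1 + q.2 • ξ) - f q.1| :=
      hφ.eventually_const_lt hm'm
    rw [Metric.eventually_nhds_iff] at hev
    obtain ⟨ε, hε, hball⟩ := hev
    set ρ : ℝ := ε / 2 with hρdef
    have hρpos : 0 < ρ := by rw [hρdef]; linarith
    have hKey : ∀ t ∈ Ioo t0 (t0 + ρ), ∀ x ∈ Metric.ball x0 ρ,
        m' * t ^ s ≤ |f (x + t • ξ) - f x| := by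
      intro t ht x hx
      have hdist : dist ((x, t) : EuclideanSpace ℝ (Fin n) × ℝ) (x0, t0) < ε := by
        rw [Prod.dist_eq]
        apply max_lt
        · exact lt_of_lt_of_le hx (by rw [hρdef]; linarith)
        · rw [Real.dist_eq]
          have h2' : t < t0 + ε := by
            have h3 := ht.2; rw [hρdef] at h3; linarith
          have h1' : t0 < t := ht.1
          show |t - t0| < ε
          rw [abs_lt]
          constructor <;> linarith
      have hgt := hball hdist
      have htpos : 0 < t := lt_trans ht0 ht.1
      have hts : 0 < t ^ s := Real.rpow_pos_of_pos htpos s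
      have h2 := mul_le_mul_of_nonneg_right (le_of_lt hgt) hts.le
      calc m' * t ^ s ≤ t ^ (-s) * |f (x + t • ξ) - f x| * t ^ s := h2
        _ = |f (x + t • ξ) - f x| * (t ^ (-s) * t ^ s) := by ring
        _ = |f (x + t • ξ) - f x| := by
            rw [← Real.rpow_add htpos, neg_add_cancel, Real.rpow_zero, mul_one]
    -- the constant K
    set K : ℝ≥0∞ := ENNReal.ofReal ((t0 + ρ)⁻¹) *
        (volume (Metric.ball x0 ρ) * ENNReal.ofReal ρ) with hKdef
    have hK0 : K ≠ 0 := by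
      rw [hKdef]
      apply mul_ne_zero
      · simp only [ne_eq, ENNReal.ofReal_eq_zero, not_le]
        positivity
      · apply mul_ne_zero
        · exact (Metric.measure_ball_pos volume x0 hρpos).ne'
        · simp only [ne_eq, ENNReal.ofReal_eq_zero, not_le]
          exact hρpos
    have hKt : K ≠ ⊤ := by
      rw [hKdef]
      exact ENNReal.mul_ne_top ENNReal.ofReal_ne_top
        (ENNReal.mul_ne_top measure_ball_lt_top.ne ENNReal.ofReal_ne_top)
    -- lower bound for I p
    have hIlow : ∀ p : ℝ, 0 < p → ENNReal.ofReal (m' ^ p) * K ≤ I p := by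
      intro p hp
      have hstep1 : ENNReal.ofReal (m' ^ p) * K =
          ∫⁻ t in Ioo t0 (t0 + ρ), (ENNReal.ofReal (m' ^ p) *
            (ENNReal.ofReal ((t0 + ρ)⁻¹) * volume (Metric.ball x0 ρ))) := by
        rw [setLIntegral_const, Real.volume_Ioo, hKdef]
        rw [show t0 + ρ - t0 = ρ by ring]
        ring
      rw [hstep1]
      have hsub : Ioo t0 (t0 + ρ) ⊆ Ioi (0:ℝ) := fun t ht => lt_trans ht0 ht.1
      refine le_trans ?_ (lintegral_mono_set hsub)
      apply setLIntegral_mono' measurableSet_Ioo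
      intro t ht
      have htpos : 0 < t := lt_trans ht0 ht.1
      have hts : 0 < t ^ s := Real.rpow_pos_of_pos htpos s
      have hinner : ENNReal.ofReal ((m' * t ^ s) ^ p) * volume (Metric.ball x0 ρ) ≤
          ∫⁻ x, ENNReal.ofReal (|f (x + t • ξ) - f x| ^ p) := by
        rw [← setLIntegral_const]
        refine le_trans (setLIntegral_mono' measurableSet_ball ?_)
          (setLIntegral_le_lintegral _ _)
        intro x hx
        apply ENNReal.ofReal_le_ofReal
        exact Real.rpow_le_rpow (by positivity) (hKey t ht x hx) hp.le
      calc ENNReal.ofReal (m' ^ p) * (ENNReal.ofReal ((t0 + ρ)⁻¹) * volume (Metric.ball x0 ρ))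
          ≤ ENNReal.ofReal (m' ^ p) * (ENNReal.ofReal (t⁻¹) * volume (Metric.ball x0 ρ)) := by
            apply mul_le_mul_right
            apply mul_le_mul_left
            apply ENNReal.ofReal_le_ofReal
            apply inv_anti₀ htpos ht.2.le
        _ = ENNReal.ofReal (t ^ (-s * p - 1)) *
            (ENNReal.ofReal ((m' * t ^ s) ^ p) * volume (Metric.ball x0 ρ)) := by
            rw [← mul_assoc, ← mul_assoc, ← ENNReal.ofReal_mul (by positivity),
              ← ENNReal.ofReal_mul (by positivity : (0:ℝ) ≤ t ^ (-s*p-1)),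
              frac_alg_low htpos hm'pos.le p]
        _ ≤ ENNReal.ofReal (t ^ (-s * p - 1)) *
            ∫⁻ x, ENNReal.ofReal (|f (x + t • ξ) - f x| ^ p) := mul_le_mul_right hinner _
    -- conclude liminf bound
    have hFlow : ∀ᶠ p : ℝ in atTop,
        (ENNReal.ofReal (p * (1 - s)) * (ENNReal.ofReal (m' ^ p) * K)) ^ (1 / (s * p))
          ≤ F p := by
      filter_upwards [eventually_gt_atTop 0] with p hp
      exact ENNReal.rpow_le_rpow (mul_le_mul_right (hIlow p hp) _) (by positivity)
    have hB' : Tendsto (fun p : ℝ =>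
        (ENNReal.ofReal (p * (1 - s)) * (ENNReal.ofReal (m' ^ p) * K)) ^ (1 / (s * p)))
        atTop (nhds (ENNReal.ofReal m' ^ (1/s))) := by
      have h := frac_ennreal_limit hs0 hs1 hm'pos 0 hK0 hKt
      simpa using h
    have hle : ENNReal.ofReal m' ^ (1/s) ≤ atTop.liminf F := by
      rw [← hB'.liminf_eq]
      exact liminf_le_liminf hFlow
    have hbl : b < ENNReal.ofReal m' ^ (1/s) := by
      have h := ENNReal.rpow_lt_rpow hbm' (by positivity : (0:ℝ) < 1/s)
      rwa [← ENNReal.rpow_mul, mul_one_div, div_self (ne_of_gt hs0),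
        ENNReal.rpow_one] at h
    exact lt_of_lt_of_le hbl hle
  -- Part 2: limsup upper bound
  have hlimsup : atTop.limsup F ≤ Msup ^ (1/s) := by
    by_cases hMtop : Msup = ⊤
    · rw [hMtop, ENNReal.top_rpow_of_pos (by positivity)]
      exact le_top
    set M : ℝ := Msup.toReal with hMdef
    have hM0 : 0 ≤ M := ENNReal.toReal_nonneg
    have hMle : ∀ (x : EuclideanSpace ℝ (Fin n)) (t : ℝ), 0 < t → |f (x + t • ξ) - f x| ≤ M * t ^ s := by
      intro x t ht
      have h1 : ENNReal.ofReal (t ^ (-s) * |f (x + t • ξ) - f x|) ≤ Msup := by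
        rw [hMsup]
        exact le_iSup_of_le x (le_iSup_of_le ⟨t, ht⟩ le_rfl)
      have h2 : t ^ (-s) * |f (x + t • ξ) - f x| ≤ M := by
        have h3 := ENNReal.toReal_mono hMtop h1
        rwa [ENNReal.toReal_ofReal (by positivity)] at h3
      have hts : 0 < t ^ s := Real.rpow_pos_of_pos ht s
      have h4 := mul_le_mul_of_nonneg_right h2 hts.le
      calc |f (x + t • ξ) - f x|
          = t ^ (-s) * |f (x + t • ξ) - f x| * t ^ s := by
            rw [mul_comm (t ^ (-s)), mul_assoc, ← Real.rpow_add ht, neg_add_cancel,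
              Real.rpow_zero, mul_one]
        _ ≤ M * t ^ s := h4
    have hIup : ∀ p : ℝ, 1 ≤ p → I p ≤ ENNReal.ofReal (M ^ (p - 1)) * C := by
      intro p hp
      have hstep : I p ≤ ∫⁻ t in Ioi (0:ℝ), ENNReal.ofReal (M ^ (p - 1)) *
          (ENNReal.ofReal (t ^ (-s - 1)) * ∫⁻ x, ENNReal.ofReal |f (x + t • ξ) - f x|) := by
        apply setLIntegral_mono' measurableSet_Ioi
        intro t ht
        have htpos : 0 < t := ht
        have hts : 0 < t ^ s := Real.rpow_pos_of_pos htpos s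
        have hin : (∫⁻ x, ENNReal.ofReal (|f (x + t • ξ) - f x| ^ p)) ≤
            ENNReal.ofReal ((M * t ^ s) ^ (p - 1)) *
              ∫⁻ x, ENNReal.ofReal |f (x + t • ξ) - f x| := by
          rw [← lintegral_const_mul' _ _ ENNReal.ofReal_ne_top]
          apply lintegral_mono
          intro x
          dsimp only
          rw [← ENNReal.ofReal_mul (by positivity)]
          apply ENNReal.ofReal_le_ofReal
          rcases eq_or_lt_of_le (abs_nonneg (f (x + t • ξ) - f x)) with h0 | h0
          · rw [← h0, Real.zero_rpow (by linarith : p ≠ 0)]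
            positivity
          · have hsplit : |f (x + t • ξ) - f x| ^ p
                = |f (x + t • ξ) - f x| ^ (p - 1) * |f (x + t • ξ) - f x| := by
              calc |f (x + t • ξ) - f x| ^ p
                  = |f (x + t • ξ) - f x| ^ (p - 1 + 1) := by congr 1; ring
                _ = |f (x + t • ξ) - f x| ^ (p - 1) * |f (x + t • ξ) - f x| ^ (1:ℝ) :=
                    Real.rpow_add h0 _ _
                _ = |f (x + t • ξ) - f x| ^ (p - 1) * |f (x + t • ξ) - f x| := by
                    rw [Real.rpow_one]
            rw [hsplit]
            apply mul_le_mul_of_nonneg_right _ (abs_nonneg _)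
            exact Real.rpow_le_rpow (abs_nonneg _) (hMle x t htpos) (by linarith)
        calc ENNReal.ofReal (t ^ (-s * p - 1)) *
            ∫⁻ x, ENNReal.ofReal (|f (x + t • ξ) - f x| ^ p)
            ≤ ENNReal.ofReal (t ^ (-s * p - 1)) * (ENNReal.ofReal ((M * t ^ s) ^ (p - 1)) *
              ∫⁻ x, ENNReal.ofReal |f (x + t • ξ) - f x|) := mul_le_mul_right hin _
          _ = ENNReal.ofReal (M ^ (p - 1)) * (ENNReal.ofReal (t ^ (-s - 1)) *
              ∫⁻ x, ENNReal.ofReal |f (x + t • ξ) - f x|) := by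
              rw [← mul_assoc, ← mul_assoc, ← ENNReal.ofReal_mul
                (by positivity : (0:ℝ) ≤ t ^ (-s*p-1)), frac_alg_up htpos hM0 p,
                ENNReal.ofReal_mul (by positivity)]
      rw [hCdef]
      rw [← lintegral_const_mul' _ _ ENNReal.ofReal_ne_top]
      exact hstep
    by_cases hzero : M = 0 ∨ C = 0
    · have hFzero : ∀ᶠ p : ℝ in atTop, F p ≤ 0 := by
        filter_upwards [eventually_gt_atTop 1] with p hp
        have hF : F p ≤ (ENNReal.ofReal (p * (1 - s)) *
            (ENNReal.ofReal (M ^ (p - 1)) * C)) ^ (1 / (s * p)) :=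
          ENNReal.rpow_le_rpow (mul_le_mul_right (hIup p hp.le) _) (by positivity)
        have hzz : ENNReal.ofReal (M ^ (p - 1)) * C = 0 := by
          rcases hzero with h | h
          · rw [h, Real.zero_rpow (by linarith : p - 1 ≠ 0)]
            simp
          · rw [h, mul_zero]
        rw [hzz, mul_zero, ENNReal.zero_rpow_of_pos (by positivity)] at hF
        exact hF
      calc atTop.limsup F ≤ atTop.limsup (fun _ : ℝ => (0:ℝ≥0∞)) := limsup_le_limsup hFzero
        _ = 0 := limsup_const 0
        _ ≤ Msup ^ (1/s) := by simp
    · push_neg at hzero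
      obtain ⟨hMne, hCne⟩ := hzero
      have hMpos : 0 < M := lt_of_le_of_ne hM0 (Ne.symm hMne)
      have hB : Tendsto (fun p : ℝ => (ENNReal.ofReal (p * (1 - s)) *
          (ENNReal.ofReal (M ^ (p - 1)) * C)) ^ (1 / (s * p))) atTop
          (nhds (ENNReal.ofReal M ^ (1/s))) := by
        have h := frac_ennreal_limit hs0 hs1 hMpos (-1) hCne hfin
        simpa [sub_eq_add_neg] using h
      have hFup : ∀ᶠ p : ℝ in atTop, F p ≤ (ENNReal.ofReal (p * (1 - s)) *
          (ENNReal.ofReal (M ^ (p - 1)) * C)) ^ (1 / (s * p)) := by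
        filter_upwards [eventually_ge_atTop 1] with p hp
        exact ENNReal.rpow_le_rpow (mul_le_mul_right (hIup p hp) _) (by positivity)
      have hofM : ENNReal.ofReal M = Msup := by
        rw [hMdef, ENNReal.ofReal_toReal hMtop]
      calc atTop.limsup F ≤ atTop.limsup (fun p : ℝ => (ENNReal.ofReal (p * (1 - s)) *
            (ENNReal.ofReal (M ^ (p - 1)) * C)) ^ (1 / (s * p))) := limsup_le_limsup hFup
        _ = ENNReal.ofReal M ^ (1/s) := hB.limsup_eq
        _ = Msup ^ (1/s) := by rw [hofM]
  exact tendsto_of_le_liminf_of_limsup_le hliminf hlimsup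
end

section
/- Let f ∈ W^{1,1}(R^n) ∩ W^{1,∞}(R^n) be nonzero. For every ξ ∈ S^{n−1}, the s-fractional L^∞ gauge converges to the L^∞ gauge as s → 1⁻: lim_{s→1⁻} (sup_{x ∈ R^n, t > 0} t^{−s}|f(x+tξ)−f(x)|)^{1/s} = ess sup_{x ∈ R^n} |⟨∇f(x), ξ⟩|. -/
open MeasureTheory Set NNReal ENNReal Filter

-- boundedness lemma
lemma aux_bounded {n : ℕ} (f : EuclideanSpace ℝ (Fin n) → ℝ) (L : ℝ≥0)
    (hf1 : Integrable f) (hlip : LipschitzWith L f) :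
    ∃ B : ℝ, 0 ≤ B ∧ ∀ x, |f x| ≤ B := by
  set c : ℝ := (volume (Metric.ball (0 : EuclideanSpace ℝ (Fin n)) 1)).toReal with hc
  have hcpos : 0 < c := by
    refine ENNReal.toReal_pos (ne_of_gt (Metric.measure_ball_pos _ _ one_pos)) (ne_of_lt measure_ball_lt_top)
  refine ⟨(L : ℝ) + (∫ y, |f y|) / c, by positivity, fun x => ?_⟩
  rcases le_or_gt (|f x|) L with h | h
  · have : (0:ℝ) ≤ (∫ y, |f y|) / c := by
      apply div_nonneg _ hcpos.le
      exact integral_nonneg fun y => abs_nonneg _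
    linarith
  have hball : volume (Metric.ball x (1:ℝ)) = volume (Metric.ball (0 : EuclideanSpace ℝ (Fin n)) 1) :=
    Measure.addHaar_ball_center volume x 1
  have h1 : (|f x| - L) * c ≤ ∫ y in Metric.ball x 1, |f y| := by
    have : ∫ y in Metric.ball x 1, (|f x| - (L:ℝ)) ≤ ∫ y in Metric.ball x 1, |f y| := by
      refine setIntegral_mono_on ?_ hf1.abs.integrableOn measurableSet_ball ?_
      · exact integrableOn_const measure_ball_lt_top.ne
      · intro y hy
        have := hlip.dist_le_mul x y
        have hd : dist x y ≤ 1 := by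
          rw [dist_comm]; exact le_of_lt (Metric.mem_ball.1 hy)
        have : |f x - f y| ≤ L := by
          calc |f x - f y| = dist (f x) (f y) := by rw [Real.dist_eq]
          _ ≤ L * dist x y := this
          _ ≤ L := by nlinarith [dist_nonneg (x := x) (y := y), L.coe_nonneg]
        have := abs_sub_abs_le_abs_sub (f x) (f y)
        linarith
    rw [setIntegral_const, smul_eq_mul] at this
    rw [measureReal_def, hball, ← hc] at this
    linarith [this]
  have h2 : ∫ y in Metric.ball x 1, |f y| ≤ ∫ y, |f y| :=
    setIntegral_le_integral hf1.abs (Filter.Eventually.of_forall fun y => abs_nonneg _)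
  have := h1.trans h2
  rw [sub_mul] at this
  have key : |f x| - L ≤ (∫ y, |f y|) / c := by
    rw [le_div_iff₀ hcpos]; nlinarith
  linarith


lemma aux_essSup_ne_top {n : ℕ} (f : EuclideanSpace ℝ (Fin n) → ℝ) (L : ℝ≥0)
    (hlip : LipschitzWith L f) (hd : Differentiable ℝ f) (ξ : EuclideanSpace ℝ (Fin n))
    (hξ : ‖ξ‖ = 1) :
    essSup (fun x => ENNReal.ofReal |fderiv ℝ f x ξ|) volume ≠ ⊤ := by
  refine ne_top_of_le_ne_top ENNReal.ofReal_ne_top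
    (essSup_le_of_ae_le (ENNReal.ofReal (L : ℝ)) (Filter.Eventually.of_forall fun x => ?_))
  refine ENNReal.ofReal_le_ofReal ?_
  calc |fderiv ℝ f x ξ| = ‖fderiv ℝ f x ξ‖ := rfl
    _ ≤ ‖fderiv ℝ f x‖ * ‖ξ‖ := (fderiv ℝ f x).le_opNorm ξ
    _ ≤ (L : ℝ) * 1 := by
        rw [hξ]
        exact mul_le_mul_of_nonneg_right
          (((hd x).hasFDerivAt).le_of_lipschitz hlip) (by norm_num)
    _ = L := mul_one _

lemma aux_deriv_bound {n : ℕ} (f : EuclideanSpace ℝ (Fin n) → ℝ) (L : ℝ≥0)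
    (hlip : LipschitzWith L f) (hd : Differentiable ℝ f) (ξ : EuclideanSpace ℝ (Fin n))
    (hξ : ‖ξ‖ = 1) (y : EuclideanSpace ℝ (Fin n)) : |fderiv ℝ f y ξ| ≤ L := by
  calc |fderiv ℝ f y ξ| = ‖fderiv ℝ f y ξ‖ := rfl
    _ ≤ ‖fderiv ℝ f y‖ * ‖ξ‖ := (fderiv ℝ f y).le_opNorm ξ
    _ ≤ (L : ℝ) * 1 := by
        rw [hξ]
        exact mul_le_mul_of_nonneg_right
          (((hd y).hasFDerivAt).le_of_lipschitz hlip) (by norm_num)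
    _ = L := mul_one _

lemma aux_hasDerivAt {n : ℕ} (f : EuclideanSpace ℝ (Fin n) → ℝ)
    (hd : Differentiable ℝ f) (ξ x : EuclideanSpace ℝ (Fin n)) (u : ℝ) :
    HasDerivAt (fun v : ℝ => f (x + v • ξ)) (fderiv ℝ f (x + u • ξ) ξ) u := by
  have h1 : HasDerivAt (fun v : ℝ => x + v • ξ) ξ u := by
    simpa using ((hasDerivAt_id u).smul_const ξ).const_add x
  exact ((hd (x + u • ξ)).hasFDerivAt).comp_hasDerivAt u h1

lemma aux_key {n : ℕ} (f : EuclideanSpace ℝ (Fin n) → ℝ) (L : ℝ≥0)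
    (hlip : LipschitzWith L f) (hd : Differentiable ℝ f) (ξ : EuclideanSpace ℝ (Fin n))
    (hξ : ‖ξ‖ = 1) (x : EuclideanSpace ℝ (Fin n)) (t : ℝ) (ht : 0 < t) :
    |f (x + t • ξ) - f x| ≤
      (essSup (fun x => ENNReal.ofReal |fderiv ℝ f x ξ|) volume).toReal * t := by
  set D : EuclideanSpace ℝ (Fin n) → ℝ := fun y => fderiv ℝ f y ξ with hD
  set m : ℝ := (essSup (fun x => ENNReal.ofReal |D x|) volume).toReal with hm
  have hmnn : 0 ≤ m := ENNReal.toReal_nonneg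
  have hDmeas : Measurable D := measurable_fderiv_apply_const ℝ f ξ
  have htop := aux_essSup_ne_top f L hlip hd ξ hξ
  -- a.e. bound
  have hae : ∀ᵐ y, |D y| ≤ m := by
    filter_upwards [ae_le_essSup (fun y => ENNReal.ofReal |D y|)] with y hy
    exact (ENNReal.ofReal_le_iff_le_toReal htop).1 hy
  -- Fubini: for a.e. x, a.e. u, |D (x + u • ξ)| ≤ m
  have hfub : ∀ᵐ x : EuclideanSpace ℝ (Fin n), ∀ᵐ u : ℝ, |D (x + u • ξ)| ≤ m := by
    have hAmeas : MeasurableSet {y : EuclideanSpace ℝ (Fin n) | m < |D y|} :=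
      measurableSet_lt measurable_const hDmeas.abs
    have hA0 : volume {y : EuclideanSpace ℝ (Fin n) | m < |D y|} = 0 := by
      have h := hae
      rw [MeasureTheory.ae_iff] at h
      simpa [not_le] using h
    have hN : ((volume : Measure (EuclideanSpace ℝ (Fin n))).prod (volume : Measure ℝ))
        {p : EuclideanSpace ℝ (Fin n) × ℝ | m < |D (p.1 + p.2 • ξ)|} = 0 := by
      have hg : Measurable fun p : EuclideanSpace ℝ (Fin n) × ℝ => p.1 + p.2 • ξ := by
        exact (measurable_fst.add (measurable_snd.smul_const ξ))
      have hset : {p : EuclideanSpace ℝ (Fin n) × ℝ | m < |D (p.1 + p.2 • ξ)|} =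
          (fun p : EuclideanSpace ℝ (Fin n) × ℝ => p.1 + p.2 • ξ) ⁻¹' {y | m < |D y|} := rfl
      rw [hset, Measure.prod_apply_symm (hg hAmeas)]
      have hzero : ∀ u : ℝ, volume {a : EuclideanSpace ℝ (Fin n) | m < |D (a + u • ξ)|} = 0 := by
        intro u
        have h2 : {a : EuclideanSpace ℝ (Fin n) | m < |D (a + u • ξ)|} =
            (fun y => y + u • ξ) ⁻¹' {y | m < |D y|} := rfl
        rw [h2, measure_preimage_add_right, hA0]
      simp [hzero]
    have := MeasureTheory.Measure.ae_ae_of_ae_prod (by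
      rw [MeasureTheory.ae_iff]
      simpa [not_le] using hN :
        ∀ᵐ p : EuclideanSpace ℝ (Fin n) × ℝ ∂((volume : Measure (EuclideanSpace ℝ (Fin n))).prod volume),
          |D (p.1 + p.2 • ξ)| ≤ m)
    exact this
  -- good points satisfy the bound for every t
  have hgood : ∀ᵐ x : EuclideanSpace ℝ (Fin n),
      ∀ t : ℝ, 0 < t → |f (x + t • ξ) - f x| ≤ m * t := by
    filter_upwards [hfub] with x hx t ht
    have hint : IntervalIntegrable (fun u : ℝ => D (x + u • ξ)) volume 0 t := by
      rw [intervalIntegrable_iff]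
      refine Integrable.mono' (g := fun _ : ℝ => (L:ℝ)) (integrableOn_const measure_Ioc_lt_top.ne)
        (hDmeas.comp (measurable_const.add (measurable_id.smul_const ξ))).aestronglyMeasurable ?_
      · exact Filter.Eventually.of_forall fun u => by
          simpa using aux_deriv_bound f L hlip hd ξ hξ (x + u • ξ)
    have hftc : ∫ u in (0:ℝ)..t, D (x + u • ξ) = f (x + t • ξ) - f x := by
      have := intervalIntegral.integral_eq_sub_of_hasDerivAt
        (f := fun v : ℝ => f (x + v • ξ)) (f' := fun u => D (x + u • ξ))
        (fun u _ => aux_hasDerivAt f hd ξ x u) hint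
      simpa using this
    have := intervalIntegral.norm_integral_le_of_norm_le_const_ae
      (C := m) (f := fun u : ℝ => D (x + u • ξ)) (a := 0) (b := t) ?_
    · rw [hftc] at this
      calc |f (x + t • ξ) - f x| ≤ m * |t - 0| := this
        _ = m * t := by rw [sub_zero, abs_of_pos ht]
    · filter_upwards [hx] with u hu _
      simpa using hu
  -- extend to all x by density + continuity
  have hdense : Dense {x : EuclideanSpace ℝ (Fin n) |
      ∀ t : ℝ, 0 < t → |f (x + t • ξ) - f x| ≤ m * t} :=
    Measure.dense_of_ae hgood
  have hcont : Continuous f := hlip.continuous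
  have hclosed : IsClosed {x : EuclideanSpace ℝ (Fin n) | |f (x + t • ξ) - f x| ≤ m * t} := by
    apply isClosed_le _ continuous_const
    exact ((hcont.comp (continuous_id.add continuous_const)).sub hcont).abs
  have hsub : {x : EuclideanSpace ℝ (Fin n) |
      ∀ t : ℝ, 0 < t → |f (x + t • ξ) - f x| ≤ m * t} ⊆
      {x : EuclideanSpace ℝ (Fin n) | |f (x + t • ξ) - f x| ≤ m * t} :=
    fun x hx => hx t ht
  have : x ∈ {x : EuclideanSpace ℝ (Fin n) | |f (x + t • ξ) - f x| ≤ m * t} := by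
    have h1 : x ∈ closure {x : EuclideanSpace ℝ (Fin n) |
        ∀ t : ℝ, 0 < t → |f (x + t • ξ) - f x| ≤ m * t} := by
      rw [hdense.closure_eq]; trivial
    exact hclosed.closure_subset_iff.2 hsub h1
  exact this

lemma aux_exists {n : ℕ} (f : EuclideanSpace ℝ (Fin n) → ℝ) (L : ℝ≥0)
    (hlip : LipschitzWith L f) (hd : Differentiable ℝ f) (ξ : EuclideanSpace ℝ (Fin n))
    (hξ : ‖ξ‖ = 1) (ε : ℝ) (hε : 0 < ε) :
    ∃ x : EuclideanSpace ℝ (Fin n), ∃ t : ℝ, 0 < t ∧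
      ((essSup (fun x => ENNReal.ofReal |fderiv ℝ f x ξ|) volume).toReal - ε) * t ≤
        |f (x + t • ξ) - f x| := by
  set m : ℝ := (essSup (fun x => ENNReal.ofReal |fderiv ℝ f x ξ|) volume).toReal with hm
  rcases le_or_gt m ε with h | h
  · exact ⟨0, 1, one_pos, by nlinarith [abs_nonneg (f (0 + (1:ℝ) • ξ) - f 0)]⟩
  -- there is a point with |D x| > m - ε
  have hx : ∃ x, m - ε < |fderiv ℝ f x ξ| := by
    by_contra hcon
    push_neg at hcon
    have hle : essSup (fun x => ENNReal.ofReal |fderiv ℝ f x ξ|) volume ≤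
        ENNReal.ofReal (m - ε) :=
      essSup_le_of_ae_le _ (Filter.Eventually.of_forall fun x =>
        ENNReal.ofReal_le_ofReal (hcon x))
    have h2 : m ≤ m - ε := by
      have := ENNReal.toReal_mono ENNReal.ofReal_ne_top hle
      rwa [ENNReal.toReal_ofReal (by linarith)] at this
    linarith
  obtain ⟨x, hx⟩ := hx
  -- the derivative at u = 0 of u ↦ f (x + u ξ)
  have hder : HasDerivAt (fun v : ℝ => f (x + v • ξ)) (fderiv ℝ f x ξ) 0 := by
    have := aux_hasDerivAt f hd ξ x 0
    simpa using this
  have hslope : Tendsto (slope (fun v : ℝ => f (x + v • ξ)) 0) (nhdsWithin 0 {(0:ℝ)}ᶜ)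
      (nhds (fderiv ℝ f x ξ)) := hasDerivAt_iff_tendsto_slope.1 hder
  have habs : Tendsto (fun v => |slope (fun v : ℝ => f (x + v • ξ)) 0 v|)
      (nhdsWithin 0 {(0:ℝ)}ᶜ) (nhds |fderiv ℝ f x ξ|) := hslope.abs
  have hev : ∀ᶠ v in nhdsWithin 0 {(0:ℝ)}ᶜ,
      m - ε < |slope (fun v : ℝ => f (x + v • ξ)) 0 v| :=
    habs.eventually (eventually_gt_nhds hx)
  have hle : nhdsWithin (0:ℝ) (Ioi 0) ≤ nhdsWithin 0 {(0:ℝ)}ᶜ :=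
    nhdsWithin_mono 0 (fun v hv => ne_of_gt hv)
  obtain ⟨t, ht, htpos'⟩ := ((hev.filter_mono hle).and eventually_mem_nhdsWithin).exists
  have hslopet : (0:ℝ) < t := htpos'
  refine ⟨x, t, hslopet, ?_⟩
  rw [slope_def_field] at ht
  have h0 : f (x + (0:ℝ) • ξ) = f x := by simp
  rw [h0] at ht
  have ht' : (m - ε) < |f (x + t • ξ) - f x| / t := by
    rwa [sub_zero, abs_div, abs_of_pos hslopet] at ht
  rw [lt_div_iff₀ hslopet] at ht'
  linarith

lemma aux_tendsto (a c T : ℝ) (hT : 0 < T) :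
    Tendsto (fun s : ℝ => ENNReal.ofReal ((T^(1-s)*a + c)^(1/s)))
      (nhdsWithin 1 (Iio (1:ℝ))) (nhds (ENNReal.ofReal (a + c))) := by
  have h1 : ContinuousAt (fun s : ℝ => T^(1-s)*a + c) 1 := by
    have hb : ContinuousAt (fun s : ℝ => T^(1-s)) 1 :=
      (Real.continuousAt_const_rpow (ne_of_gt hT)).comp
        (continuousAt_const.sub continuousAt_id)
    exact (hb.mul continuousAt_const).add continuousAt_const
  have h2 : ContinuousAt (fun s : ℝ => 1/s) 1 :=
    continuousAt_const.div continuousAt_id one_ne_zero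
  have h3 : ContinuousAt (fun s : ℝ => (T^(1-s)*a + c)^(1/s)) 1 := by
    have hj : ContinuousAt (fun p : ℝ × ℝ => p.1 ^ p.2) (T^(1-(1:ℝ))*a + c, 1/(1:ℝ)) :=
      Real.continuousAt_rpow _ (Or.inr (by norm_num))
    exact ContinuousAt.comp (g := fun p : ℝ × ℝ => p.1 ^ p.2)
      (f := fun s : ℝ => (T^(1-s)*a + c, 1/s)) hj (h1.prodMk h2)
  have h4 : Tendsto (fun s : ℝ => ENNReal.ofReal ((T^(1-s)*a + c)^(1/s)))
      (nhds (1:ℝ)) (nhds (ENNReal.ofReal ((T^(1-(1:ℝ))*a + c)^(1/(1:ℝ))))) :=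
    (ENNReal.continuous_ofReal.continuousAt.comp h3).tendsto
  have h5 : Tendsto (fun s : ℝ => ENNReal.ofReal ((T^(1-s)*a + c)^(1/s)))
      (nhdsWithin 1 (Iio (1:ℝ))) (nhds (ENNReal.ofReal ((T^(1-(1:ℝ))*a + c)^(1/(1:ℝ))))) :=
    h4.mono_left nhdsWithin_le_nhds
  convert h5 using 2
  norm_num

/-- Let `f ∈ W^{1,1}(ℝⁿ) ∩ W^{1,∞}(ℝⁿ)` be nonzero. For every unit
vector `ξ`, the `s`-fractional `L^∞` gauge converges to the `L^∞` gauge as `s → 1⁻`: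
`lim_{s→1⁻} (sup_{x,t>0} t^{−s}|f(x+tξ)−f(x)|)^{1/s} = ess sup_x |⟨∇f(x), ξ⟩|`. -/
theorem fractional_linfty_gauge_tendsto_one {n : ℕ}
    (f : EuclideanSpace ℝ (Fin n) → ℝ) (L : ℝ≥0)
    (hf1 : Integrable f) (hlip : LipschitzWith L f) (hd : Differentiable ℝ f)
    (hg1 : Integrable (fun x => fderiv ℝ f x)) (hne : f ≠ 0)
    (ξ : EuclideanSpace ℝ (Fin n)) (hξ : ‖ξ‖ = 1) :
    Tendsto
      (fun s : ℝ =>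
        (⨆ (x : EuclideanSpace ℝ (Fin n)) (t : {t : ℝ // 0 < t}),
          ENNReal.ofReal ((t : ℝ) ^ (-s) * |f (x + (t : ℝ) • ξ) - f x|)) ^ (1 / s))
      (nhdsWithin 1 (Iio (1:ℝ)))
      (nhds (essSup (fun x => ENNReal.ofReal |fderiv ℝ f x ξ|) volume)) := by
  obtain ⟨B, hB0, hB⟩ := aux_bounded f L hf1 hlip
  have htop : essSup (fun x => ENNReal.ofReal |fderiv ℝ f x ξ|) volume ≠ ⊤ :=
    aux_essSup_ne_top f L hlip hd ξ hξ
  set m : ℝ := (essSup (fun x => ENNReal.ofReal |fderiv ℝ f x ξ|) volume).toReal with hm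
  have hmnn : 0 ≤ m := ENNReal.toReal_nonneg
  have hE0m : essSup (fun x => ENNReal.ofReal |fderiv ℝ f x ξ|) volume = ENNReal.ofReal m :=
    (ENNReal.ofReal_toReal htop).symm
  rw [hE0m]
  set F : ℝ → ℝ≥0∞ := fun s : ℝ =>
    (⨆ (x : EuclideanSpace ℝ (Fin n)) (t : {t : ℝ // 0 < t}),
      ENNReal.ofReal ((t : ℝ) ^ (-s) * |f (x + (t : ℝ) • ξ) - f x|)) ^ (1 / s) with hFdef
  apply tendsto_of_le_liminf_of_limsup_le
  · -- liminf lower bound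
    refine ENNReal.le_of_forall_pos_le_add fun ε hε _ => ?_
    set δ : ℝ := (ε : ℝ) with hδdef
    have hδ0 : 0 < δ := hε
    rcases le_or_gt m δ with hmd | hmd
    · calc ENNReal.ofReal m ≤ ENNReal.ofReal δ := ENNReal.ofReal_le_ofReal hmd
        _ = (ε : ℝ≥0∞) := ENNReal.ofReal_coe_nnreal
        _ ≤ liminf F (nhdsWithin 1 (Iio 1)) + ε := le_add_self
    obtain ⟨x, t, ht, hlow⟩ := aux_exists f L hlip hd ξ hξ δ hδ0
    rw [← hm] at hlow
    have hkey : ∀ᶠ s in nhdsWithin (1:ℝ) (Iio 1),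
        ENNReal.ofReal ((t^(1-s)*(m-δ) + 0)^(1/s)) ≤ F s := by
      filter_upwards [Ioo_mem_nhdsLT_of_mem (show (1:ℝ) ∈ Ioc (0:ℝ) 1 by norm_num)] with s hs
      obtain ⟨hs0, hs1⟩ := hs
      have hsinv : (0:ℝ) ≤ 1/s := by positivity
      have hbase : (0:ℝ) ≤ t^(1-s)*(m-δ) + 0 := by
        have := Real.rpow_nonneg ht.le (1-s)
        nlinarith
      have hreal : t^(1-s)*(m-δ) + 0 ≤ t^(-s) * |f (x + t•ξ) - f x| := by
        have h1 : t^((1:ℝ)-s) = t^(-s) * t := by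
          rw [show (1:ℝ)-s = -s+1 by ring, Real.rpow_add ht, Real.rpow_one]
        have h2 : (0:ℝ) ≤ t^(-s) := Real.rpow_nonneg ht.le _
        have h3 := mul_le_mul_of_nonneg_left hlow h2
        calc t^((1:ℝ)-s)*(m-δ) + 0 = t^(-s)*((m-δ)*t) := by rw [h1]; ring
          _ ≤ t^(-s) * |f (x + t•ξ) - f x| := h3
      calc ENNReal.ofReal ((t^(1-s)*(m-δ)+0)^(1/s))
          = (ENNReal.ofReal (t^(1-s)*(m-δ)+0))^(1/s) :=
            (ENNReal.ofReal_rpow_of_nonneg hbase hsinv).symm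
        _ ≤ F s := by
            rw [hFdef]
            refine ENNReal.rpow_le_rpow ?_ hsinv
            refine le_trans (ENNReal.ofReal_le_ofReal hreal) ?_
            exact le_iSup_of_le x (le_iSup_of_le ⟨t, ht⟩ le_rfl)
    have htend := aux_tendsto (m-δ) 0 t ht
    have hlim : ENNReal.ofReal (m-δ+0) ≤ liminf F (nhdsWithin 1 (Iio 1)) := by
      have hmono := Filter.liminf_le_liminf hkey
      rwa [htend.liminf_eq] at hmono
    calc ENNReal.ofReal m = ENNReal.ofReal (m-δ) + ENNReal.ofReal δ := by
          rw [← ENNReal.ofReal_add (by linarith) hδ0.le]; norm_num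
      _ ≤ liminf F (nhdsWithin 1 (Iio 1)) + ε := by
          refine add_le_add ?_ (le_of_eq ENNReal.ofReal_coe_nnreal)
          simpa using hlim
  · -- limsup upper bound
    refine ENNReal.le_of_forall_pos_le_add fun ε hε _ => ?_
    set δ : ℝ := (ε : ℝ) with hδdef
    have hδ0 : 0 < δ := hε
    set T : ℝ := max 1 ((2*B/δ)^2) with hTdef
    have hT1 : 1 ≤ T := le_max_left _ _
    have hT0 : 0 < T := lt_of_lt_of_le one_pos hT1
    have hc0 : (0:ℝ) ≤ 2*B*T^(-(2⁻¹:ℝ)) := by positivity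
    have hcδ : 2*B*T^(-(2⁻¹:ℝ)) ≤ δ := by
      have hq : (0:ℝ) ≤ 2*B/δ := by positivity
      have h1 : (2*B/δ)^2 ≤ T := le_max_right _ _
      have h2 : 2*B/δ ≤ T^(2⁻¹:ℝ) := by
        calc 2*B/δ = ((2*B/δ)^2)^(2⁻¹:ℝ) := by
              rw [← Real.rpow_natCast (2*B/δ) 2, ← Real.rpow_mul hq]
              norm_num
          _ ≤ T^(2⁻¹:ℝ) := Real.rpow_le_rpow (by positivity) h1 (by norm_num)
      have h3 : (0:ℝ) < T^(2⁻¹:ℝ) := Real.rpow_pos_of_pos hT0 _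
      have h4 : δ * (2*B/δ) = 2*B := by field_simp
      rw [Real.rpow_neg hT0.le, ← div_eq_mul_inv, div_le_iff₀ h3]
      nlinarith [mul_le_mul_of_nonneg_left h2 hδ0.le]
    have hkey : ∀ᶠ s in nhdsWithin (1:ℝ) (Iio 1),
        F s ≤ ENNReal.ofReal ((T^(1-s)*m + 2*B*T^(-(2⁻¹:ℝ)))^(1/s)) := by
      filter_upwards [Ioo_mem_nhdsLT_of_mem (show (1:ℝ) ∈ Ioc (2⁻¹:ℝ) 1 by norm_num)] with s hs
      obtain ⟨hs0, hs1⟩ := hs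
      have hspos : (0:ℝ) < s := by linarith
      have hsinv : (0:ℝ) ≤ 1/s := by positivity
      have hTs0 : (0:ℝ) ≤ T^((1:ℝ)-s) := Real.rpow_nonneg hT0.le _
      have hR0 : (0:ℝ) ≤ T^(1-s)*m + 2*B*T^(-(2⁻¹:ℝ)) := by nlinarith
      have hG : (⨆ (x : EuclideanSpace ℝ (Fin n)) (t : {t : ℝ // 0 < t}),
          ENNReal.ofReal ((t : ℝ) ^ (-s) * |f (x + (t : ℝ) • ξ) - f x|)) ≤
          ENNReal.ofReal (T^(1-s)*m + 2*B*T^(-(2⁻¹:ℝ))) := by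
        refine iSup_le fun x => iSup_le fun tp => ENNReal.ofReal_le_ofReal ?_
        obtain ⟨t, ht⟩ := tp
        rcases le_total t T with htT | hTt
        · have h1 : |f (x + t•ξ) - f x| ≤ m * t := by
            have := aux_key f L hlip hd ξ hξ x t ht
            rwa [← hm] at this
          have h2 : (0:ℝ) ≤ t^(-s) := Real.rpow_nonneg ht.le _
          have h3 : t^(-s) * t = t^((1:ℝ)-s) := by
            rw [show (1:ℝ)-s = -s+1 by ring, Real.rpow_add ht, Real.rpow_one]
          have h4 : t^((1:ℝ)-s) ≤ T^((1:ℝ)-s) := Real.rpow_le_rpow ht.le htT (by linarith)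
          calc t^(-s) * |f (x + t•ξ) - f x| ≤ t^(-s) * (m*t) := mul_le_mul_of_nonneg_left h1 h2
            _ = t^((1:ℝ)-s) * m := by rw [← h3]; ring
            _ ≤ T^((1:ℝ)-s) * m := mul_le_mul_of_nonneg_right h4 hmnn
            _ ≤ T^(1-s)*m + 2*B*T^(-(2⁻¹:ℝ)) := le_add_of_nonneg_right hc0
        · have h1 : |f (x + t•ξ) - f x| ≤ 2*B := by
            calc |f (x + t•ξ) - f x| = |f (x + t•ξ) + -(f x)| := by rw [sub_eq_add_neg]
              _ ≤ |f (x + t•ξ)| + |(-(f x))| := abs_add_le _ _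
              _ = |f (x + t•ξ)| + |f x| := by rw [abs_neg]
              _ ≤ 2*B := by linarith [hB (x + t•ξ), hB x]
          have ht0T : (0:ℝ) < t := ht
          have h2 : t^(-s) ≤ T^(-(2⁻¹:ℝ)) := by
            calc t^(-s) ≤ T^(-s) := by
                  rw [Real.rpow_neg hT0.le, Real.rpow_neg ht0T.le]
                  exact inv_anti₀ (Real.rpow_pos_of_pos hT0 s)
                    (Real.rpow_le_rpow hT0.le hTt hspos.le)
              _ ≤ T^(-(2⁻¹:ℝ)) := Real.rpow_le_rpow_of_exponent_le hT1 (by linarith)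
          have h5 : (0:ℝ) ≤ t^(-s) := Real.rpow_nonneg ht.le _
          calc t^(-s) * |f (x + t•ξ) - f x| ≤ T^(-(2⁻¹:ℝ)) * (2*B) :=
                mul_le_mul h2 h1 (abs_nonneg _) (Real.rpow_nonneg hT0.le _)
            _ = 2*B*T^(-(2⁻¹:ℝ)) := by ring
            _ ≤ T^(1-s)*m + 2*B*T^(-(2⁻¹:ℝ)) := le_add_of_nonneg_left (by nlinarith)
      calc F s ≤ (ENNReal.ofReal (T^(1-s)*m + 2*B*T^(-(2⁻¹:ℝ))))^(1/s) := by
            rw [hFdef]; exact ENNReal.rpow_le_rpow hG hsinv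
        _ = ENNReal.ofReal ((T^(1-s)*m + 2*B*T^(-(2⁻¹:ℝ)))^(1/s)) :=
            ENNReal.ofReal_rpow_of_nonneg hR0 hsinv
    have htend := aux_tendsto m (2*B*T^(-(2⁻¹:ℝ))) T hT0
    have hmono := Filter.limsup_le_limsup hkey
    rw [htend.limsup_eq] at hmono
    calc limsup F (nhdsWithin 1 (Iio 1)) ≤ ENNReal.ofReal (m + 2*B*T^(-(2⁻¹:ℝ))) := hmono
      _ ≤ ENNReal.ofReal (m + δ) := ENNReal.ofReal_le_ofReal (by linarith)
      _ = ENNReal.ofReal m + ε := by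
          rw [ENNReal.ofReal_add hmnn hδ0.le, ENNReal.ofReal_coe_nnreal]
  · isBoundedDefault
  · isBoundedDefault
end

section
/- Fix p > 1, s ∈ (0,1), ϱ > 0, and set p_s := p(1−s)+s. For f ∈ W^{1,1}(R^n) ∩ W^{1,∞}(R^n) and a unit vector ξ, one has ∫_0^ϱ ∫_{R^n} t^{−s−1} |f(x+tξ)−f(x)|^{p_s} dx dt ≤ (ϱ^{p(1−s)}/(p(1−s))) · ‖∇f‖_{L^∞}^{(p−1)(1−s)} ‖∇f‖_{L^1}. -/
open MeasureTheory Set NNReal ENNReal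

/-- Fix `p > 1`, `s ∈ (0,1)`, `ϱ > 0`, and set `p_s := p(1−s)+s`.
For `f ∈ W^{1,1}(ℝⁿ) ∩ W^{1,∞}(ℝⁿ)` and a unit vector `ξ`,
`∫_0^ϱ ∫ t^{−s−1}|f(x+tξ)−f(x)|^{p_s} dx dt
  ≤ (ϱ^{p(1−s)}/(p(1−s))) ‖∇f‖_{L^∞}^{(p−1)(1−s)} ‖∇f‖_{L^1}`. -/
theorem near_origin_fractional_bound {n : ℕ}
    (f : EuclideanSpace ℝ (Fin n) → ℝ) (L : ℝ≥0)
    (hf1 : Integrable f) (hlip : LipschitzWith L f) (hd : Differentiable ℝ f)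
    (hg1 : Integrable (fun x => ‖fderiv ℝ f x‖))
    (p s ϱ : ℝ) (hp : 1 < p) (hs : s ∈ Ioo (0:ℝ) 1) (hϱ : 0 < ϱ)
    (ξ : EuclideanSpace ℝ (Fin n)) (hξ : ‖ξ‖ = 1) :
    (∫⁻ t in Ioo (0:ℝ) ϱ, ENNReal.ofReal (t ^ (-s - 1)) *
        ∫⁻ x, ENNReal.ofReal (|f (x + t • ξ) - f x| ^ (p * (1 - s) + s)))
      ≤ ENNReal.ofReal (ϱ ^ (p * (1 - s)) / (p * (1 - s))) *
          (essSup (fun x => ENNReal.ofReal ‖fderiv ℝ f x‖) volume) ^ ((p - 1) * (1 - s)) *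
          ∫⁻ x, ENNReal.ofReal ‖fderiv ℝ f x‖ := by
  obtain ⟨hs0, hs1⟩ := hs
  set g : EuclideanSpace ℝ (Fin n) → ℝ := fun x => ‖fderiv ℝ f x‖ with hg_def
  have hg_meas : Measurable g := (measurable_fderiv ℝ f).norm
  have hg_nonneg : ∀ x, 0 ≤ g x := fun x => norm_nonneg _
  have hgL : ∀ x, g x ≤ L := fun x => norm_fderiv_le_of_lipschitz ℝ hlip
  set M := essSup (fun x => ENNReal.ofReal (g x)) volume with hM_def
  set I := ∫⁻ x, ENNReal.ofReal (g x) with hI_def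
  have hM_top : M ≠ ∞ := by
    refine ne_top_of_le_ne_top (by simp : (ENNReal.ofReal (L:ℝ)) ≠ ∞) ?_
    exact essSup_le_of_ae_le _
      (Filter.Eventually.of_forall fun x => ENNReal.ofReal_le_ofReal (hgL x))
  set Mr := M.toReal with hMr_def
  have hMr_nonneg : 0 ≤ Mr := ENNReal.toReal_nonneg
  have hMofReal : ENNReal.ofReal Mr = M := ENNReal.ofReal_toReal hM_top
  have hae_g : ∀ᵐ y, g y ≤ Mr := by
    filter_upwards [ae_le_essSup (fun x => ENNReal.ofReal (g x))] with y hy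
    exact (ENNReal.ofReal_le_ofReal_iff hMr_nonneg).mp (by rw [hMofReal]; exact hy)
  set θ := (p - 1) * (1 - s) with hθ_def
  have hθ_pos : 0 < θ := mul_pos (by linarith) (by linarith)
  have hps : p * (1 - s) + s = θ + 1 := by rw [hθ_def]; ring
  -- integrability of the translated gradient on segments
  have hInt : ∀ (x : EuclideanSpace ℝ (Fin n)) (t : ℝ), IntegrableOn (fun τ : ℝ => g (x + τ • ξ)) (Ioc (0:ℝ) t) := by
    intro x t
    refine Integrable.mono'
      ((integrableOn_const (by simp [Real.volume_Ioc]) :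
        IntegrableOn (fun _ : ℝ => (L:ℝ)) (Ioc (0:ℝ) t) volume))
      ((hg_meas.comp (by fun_prop : Measurable fun τ : ℝ => x + τ • ξ)).aestronglyMeasurable.restrict) ?_
    exact Filter.Eventually.of_forall fun τ => by
      simpa [Real.norm_eq_abs, abs_of_nonneg (hg_nonneg _)] using hgL (x + τ • ξ)
  -- FTC bound
  have key1 : ∀ (t : ℝ), 0 < t → ∀ x,
      |f (x + t • ξ) - f x| ≤ ∫ τ in Ioc (0:ℝ) t, g (x + τ • ξ) := by
    intro t ht x
    set D : ℝ → ℝ := fun τ => (fderiv ℝ f (x + τ • ξ)) ξ with hD_def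
    have hderiv : ∀ τ : ℝ, HasDerivAt (fun τ => f (x + τ • ξ)) (D τ) τ := by
      intro τ
      have hcurve : HasDerivAt (fun τ : ℝ => x + τ • ξ) ξ τ := by
        simpa using ((hasDerivAt_id τ).smul_const ξ).const_add x
      simpa [Function.comp_def] using (hd _).hasFDerivAt.comp_hasDerivAt τ hcurve
    have hD_meas : Measurable D :=
      (measurable_fderiv_apply_const (𝕜 := ℝ) (f := f) ξ).comp (by fun_prop : Measurable fun τ : ℝ => x + τ • ξ)
    have hD_bound : ∀ τ, |D τ| ≤ g (x + τ • ξ) := by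
      intro τ
      calc |D τ| ≤ ‖fderiv ℝ f (x + τ • ξ)‖ * ‖ξ‖ := (fderiv ℝ f (x + τ • ξ)).le_opNorm ξ
        _ = g (x + τ • ξ) := by rw [hξ, mul_one]
    have hDi : IntervalIntegrable D volume 0 t := by
      rw [intervalIntegrable_iff]
      refine Integrable.mono'
        ((integrableOn_const measure_Ioc_lt_top.ne :
          IntegrableOn (fun _ : ℝ => (L:ℝ)) (Set.uIoc (0:ℝ) t) volume))
        hD_meas.aestronglyMeasurable.restrict ?_
      exact Filter.Eventually.of_forall fun τ => by
        simpa [Real.norm_eq_abs] using (hD_bound τ).trans (hgL _)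
    have hgi : IntervalIntegrable (fun τ : ℝ => g (x + τ • ξ)) volume 0 t := by
      rw [intervalIntegrable_iff, uIoc_of_le ht.le]
      exact hInt x t
    have hftc : ∫ τ in (0:ℝ)..t, D τ = f (x + t • ξ) - f x := by
      have := intervalIntegral.integral_eq_sub_of_hasDerivAt
        (f := fun τ => f (x + τ • ξ)) (fun τ _ => hderiv τ) hDi
      simpa using this
    calc |f (x + t • ξ) - f x| = |∫ τ in (0:ℝ)..t, D τ| := by rw [hftc]
      _ ≤ ∫ τ in (0:ℝ)..t, |D τ| := by
          simpa [Real.norm_eq_abs] using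
            intervalIntegral.norm_integral_le_integral_norm (f := D) (μ := volume) ht.le
      _ ≤ ∫ τ in (0:ℝ)..t, g (x + τ • ξ) :=
          intervalIntegral.integral_mono_on ht.le hDi.abs hgi fun τ _ => hD_bound τ
      _ = ∫ τ in Ioc (0:ℝ) t, g (x + τ • ξ) := intervalIntegral.integral_of_le ht.le
  -- a.e. bound via essSup and Fubini
  have key2 : ∀ (t : ℝ), 0 < t →
      ∀ᵐ x, (∫ τ in Ioc (0:ℝ) t, g (x + τ • ξ)) ≤ t * Mr := by
    intro t ht
    have hswap : ∀ᵐ x, ∀ᵐ τ ∂(volume.restrict (Ioc (0:ℝ) t)), g (x + τ • ξ) ≤ Mr := by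
      have hmeas : MeasurableSet {q : ℝ × EuclideanSpace ℝ (Fin n) | g (q.2 + q.1 • ξ) ≤ Mr} :=
        measurableSet_le (hg_meas.comp (by fun_prop)) measurable_const
      refine (Measure.ae_ae_comm (μ := volume.restrict (Ioc (0:ℝ) t)) (ν := volume) hmeas).mp ?_
      refine Filter.Eventually.of_forall fun τ => ?_
      exact (measurePreserving_add_right volume (τ • ξ)).quasiMeasurePreserving.ae hae_g
    filter_upwards [hswap] with x hx
    calc (∫ τ in Ioc (0:ℝ) t, g (x + τ • ξ)) ≤ ∫ _ in Ioc (0:ℝ) t, Mr :=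
          integral_mono_ae (hInt x t)
            (integrableOn_const (by simp [Real.volume_Ioc])) hx
      _ = t * Mr := by
          simp [Real.volume_Ioc, ENNReal.toReal_ofReal ht.le, ht.le]
  -- inner bound for fixed t
  have inner : ∀ (t : ℝ), 0 < t →
      (∫⁻ x, ENNReal.ofReal (|f (x + t • ξ) - f x| ^ (p * (1 - s) + s)))
        ≤ ENNReal.ofReal ((t * Mr) ^ θ) * (ENNReal.ofReal t * I) := by
    intro t ht
    have step1 : (∫⁻ x, ENNReal.ofReal (|f (x + t • ξ) - f x| ^ (p * (1 - s) + s)))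
        ≤ ∫⁻ x, ENNReal.ofReal ((t * Mr) ^ θ) *
            ENNReal.ofReal (∫ τ in Ioc (0:ℝ) t, g (x + τ • ξ)) := by
      refine lintegral_mono_ae ?_
      filter_upwards [key2 t ht] with x hx
      have h1 : |f (x + t • ξ) - f x| ≤ ∫ τ in Ioc (0:ℝ) t, g (x + τ • ξ) := key1 t ht x
      have habs : (0:ℝ) ≤ |f (x + t • ξ) - f x| := abs_nonneg _
      have h2 : |f (x + t • ξ) - f x| ^ (p * (1 - s) + s)
          ≤ (t * Mr) ^ θ * (∫ τ in Ioc (0:ℝ) t, g (x + τ • ξ)) := by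
        rw [hps, Real.rpow_add' habs (by positivity)]
        rw [Real.rpow_one]
        exact mul_le_mul (Real.rpow_le_rpow habs (h1.trans hx) hθ_pos.le) h1 habs
          (Real.rpow_nonneg (by positivity) θ)
      calc ENNReal.ofReal (|f (x + t • ξ) - f x| ^ (p * (1 - s) + s))
          ≤ ENNReal.ofReal ((t * Mr) ^ θ * (∫ τ in Ioc (0:ℝ) t, g (x + τ • ξ))) :=
            ENNReal.ofReal_le_ofReal h2
        _ = _ := ENNReal.ofReal_mul (Real.rpow_nonneg (by positivity) θ)
    have step3 : (∫⁻ x, ENNReal.ofReal (∫ τ in Ioc (0:ℝ) t, g (x + τ • ξ)))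
        = ENNReal.ofReal t * I := by
      have heq : ∀ x, ENNReal.ofReal (∫ τ in Ioc (0:ℝ) t, g (x + τ • ξ))
          = ∫⁻ τ in Ioc (0:ℝ) t, ENNReal.ofReal (g (x + τ • ξ)) := fun x =>
        MeasureTheory.ofReal_integral_eq_lintegral_ofReal (hInt x t)
          (Filter.Eventually.of_forall fun τ => hg_nonneg _)
      simp_rw [heq]
      have hmu : AEMeasurable
          (Function.uncurry fun (x : EuclideanSpace ℝ (Fin n)) (τ : ℝ) =>
            ENNReal.ofReal (g (x + τ • ξ)))
          (volume.prod (volume.restrict (Ioc (0:ℝ) t))) := by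
        refine Measurable.aemeasurable ?_
        show Measurable fun q : EuclideanSpace ℝ (Fin n) × ℝ => ENNReal.ofReal (g (q.1 + q.2 • ξ))
        exact ENNReal.measurable_ofReal.comp (hg_meas.comp (by fun_prop))
      rw [lintegral_lintegral_swap hmu]
      have heach : ∀ τ : ℝ, (∫⁻ x, ENNReal.ofReal (g (x + τ • ξ))) = I := fun τ =>
        lintegral_add_right_eq_self (fun y => ENNReal.ofReal (g y)) (τ • ξ)
      simp_rw [heach]
      simp [Real.volume_Ioc, mul_comm]
    calc (∫⁻ x, ENNReal.ofReal (|f (x + t • ξ) - f x| ^ (p * (1 - s) + s)))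
        ≤ ∫⁻ x, ENNReal.ofReal ((t * Mr) ^ θ) *
            ENNReal.ofReal (∫ τ in Ioc (0:ℝ) t, g (x + τ • ξ)) := step1
      _ = ENNReal.ofReal ((t * Mr) ^ θ) *
            ∫⁻ x, ENNReal.ofReal (∫ τ in Ioc (0:ℝ) t, g (x + τ • ξ)) :=
          lintegral_const_mul' _ _ ENNReal.ofReal_ne_top
      _ = ENNReal.ofReal ((t * Mr) ^ θ) * (ENNReal.ofReal t * I) := by rw [step3]
  set r := p * (1 - s) - 1 with hr_def
  have hr : -1 < r := by
    have : 0 < p * (1 - s) := mul_pos (by linarith) (by linarith)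
    rw [hr_def]; linarith
  -- bound the outer integral pointwise
  have houter : (∫⁻ t in Ioo (0:ℝ) ϱ, ENNReal.ofReal (t ^ (-s - 1)) *
        ∫⁻ x, ENNReal.ofReal (|f (x + t • ξ) - f x| ^ (p * (1 - s) + s)))
      ≤ ∫⁻ t in Ioo (0:ℝ) ϱ, ENNReal.ofReal (t ^ r) * (ENNReal.ofReal (Mr ^ θ) * I) := by
    refine lintegral_mono_ae ?_
    filter_upwards [ae_restrict_mem measurableSet_Ioo] with t ht
    have ht0 : 0 < t := ht.1
    calc ENNReal.ofReal (t ^ (-s - 1)) *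
          ∫⁻ x, ENNReal.ofReal (|f (x + t • ξ) - f x| ^ (p * (1 - s) + s))
        ≤ ENNReal.ofReal (t ^ (-s - 1)) *
            (ENNReal.ofReal ((t * Mr) ^ θ) * (ENNReal.ofReal t * I)) :=
          mul_le_mul_right (inner t ht0) _
      _ = ENNReal.ofReal (t ^ r) * (ENNReal.ofReal (Mr ^ θ) * I) := by
          rw [Real.mul_rpow ht0.le hMr_nonneg, ENNReal.ofReal_mul (by positivity)]
          have hcollapse : t ^ (-s - 1) * t ^ θ * t = t ^ r := by
            rw [← Real.rpow_add ht0, ← Real.rpow_add_one (ne_of_gt ht0)]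
            congr 1
            rw [hr_def, hθ_def]; ring
          calc ENNReal.ofReal (t ^ (-s - 1)) *
                (ENNReal.ofReal (t ^ θ) * ENNReal.ofReal (Mr ^ θ) * (ENNReal.ofReal t * I))
              = (ENNReal.ofReal (t ^ (-s - 1)) * ENNReal.ofReal (t ^ θ) * ENNReal.ofReal t) *
                  (ENNReal.ofReal (Mr ^ θ) * I) := by ring
            _ = ENNReal.ofReal (t ^ (-s - 1) * t ^ θ * t) * (ENNReal.ofReal (Mr ^ θ) * I) := by
                rw [← ENNReal.ofReal_mul (by positivity), ← ENNReal.ofReal_mul (by positivity)]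
            _ = ENNReal.ofReal (t ^ r) * (ENNReal.ofReal (Mr ^ θ) * I) := by rw [hcollapse]
  -- compute the power integral
  have hA : (∫⁻ t in Ioo (0:ℝ) ϱ, ENNReal.ofReal (t ^ r))
      = ENNReal.ofReal (ϱ ^ (p * (1 - s)) / (p * (1 - s))) := by
    rw [setLIntegral_congr Ioo_ae_eq_Ioc]
    have hint : IntegrableOn (fun t : ℝ => t ^ r) (Ioc (0:ℝ) ϱ) := by
      have h1 := intervalIntegral.intervalIntegrable_rpow' (a := (0:ℝ)) (b := ϱ) hr
      rwa [intervalIntegrable_iff, uIoc_of_le hϱ.le] at h1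
    rw [← MeasureTheory.ofReal_integral_eq_lintegral_ofReal hint ?_]
    · congr 1
      rw [← intervalIntegral.integral_of_le hϱ.le, integral_rpow (Or.inl hr)]
      rw [Real.zero_rpow (by rw [hr_def]; intro h; nlinarith), sub_zero]
      congr 1 <;> rw [hr_def] <;> ring
    · filter_upwards [ae_restrict_mem measurableSet_Ioc] with t ht
      exact Real.rpow_nonneg ht.1.le r
  -- assemble
  have hconst : (∫⁻ t in Ioo (0:ℝ) ϱ, ENNReal.ofReal (t ^ r) * (ENNReal.ofReal (Mr ^ θ) * I))
      = ENNReal.ofReal (ϱ ^ (p * (1 - s)) / (p * (1 - s))) * (ENNReal.ofReal (Mr ^ θ) * I) := by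
    have hI_lt : I ≠ ∞ := by
      have h1 := hg1.hasFiniteIntegral
      rw [hasFiniteIntegral_iff_ofReal (Filter.Eventually.of_forall hg_nonneg)] at h1
      exact h1.ne
    rw [lintegral_mul_const' _ _ (ENNReal.mul_ne_top ENNReal.ofReal_ne_top hI_lt), hA]
  refine houter.trans ?_
  rw [hconst]
  have hMθ : ENNReal.ofReal (Mr ^ θ) = M ^ θ := by
    rw [← ENNReal.ofReal_rpow_of_nonneg hMr_nonneg hθ_pos.le, hMofReal]
  rw [hMθ, ← mul_assoc]
end

section
/- Let K be a bounded star body in R^n containing the origin in its interior, and let f ∈ W^{1,1}(R^n) ∩ W^{1,∞}(R^n) be nonzero with directional s-Hölder constant d_s := sup_{x≠y} |f(x)−f(y)|/‖x−y‖_K^s finite. Then for each p > 1, ∫∫_{R^n×R^n} |f(x)−f(y)|^p / ‖x−y‖_K^{n+sp} dx dy ≤ d_s^{p−1} ∫∫ |f(x)−f(y)| / ‖x−y‖_K^{n+s} dx dy, and consequently limsup_{p→∞} ( p(1−s) ∫∫ |f(x)−f(y)|^p / ‖x−y‖_K^{n+sp} dx dy )^{1/p} ≤ d_s, provided the right-hand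 double integral is finite. -/
open MeasureTheory Set NNReal ENNReal Filter

/-- Let `K` be a bounded star body in `ℝⁿ` with `0` in its interior,
formalized via its gauge `gK` satisfying `c‖z‖ ≤ gK z ≤ C‖z‖` with `0 < c ≤ C`, and let
`f ∈ W^{1,1} ∩ W^{1,∞}` be nonzero with finite anisotropic `s`-Hölder constant
`d_s = sup_{x≠y} |f(x)−f(y)|/gK(x−y)^s`. Then for each `p > 1`,
`∬ |f(x)−f(y)|^p / gK(x−y)^{n+sp} ≤ d_s^{p−1} ∬ |f(x)−f(y)| / gK(x−y)^{n+s}`, and,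
provided the latter double integral is finite,
`limsup_{p→∞} (p(1−s) ∬ |f(x)−f(y)|^p / gK(x−y)^{n+sp})^{1/p} ≤ d_s`. -/
theorem anisotropic_holder_limsup {n : ℕ}
    (f : EuclideanSpace ℝ (Fin n) → ℝ) (L : ℝ≥0)
    (hf1 : Integrable f) (hlip : LipschitzWith L f) (hne : f ≠ 0)
    (s : ℝ) (hs : s ∈ Ioo (0:ℝ) 1)
    (gK : EuclideanSpace ℝ (Fin n) → ℝ) (c C : ℝ) (hc : 0 < c) (hcC : c ≤ C)
    (hK : ∀ z, c * ‖z‖ ≤ gK z ∧ gK z ≤ C * ‖z‖)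
    (hbdd : BddAbove {r : ℝ | ∃ x y : EuclideanSpace ℝ (Fin n),
      x ≠ y ∧ r = |f x - f y| / gK (x - y) ^ s})
    (hJ : (∫⁻ z : EuclideanSpace ℝ (Fin n) × EuclideanSpace ℝ (Fin n),
        ENNReal.ofReal (|f z.1 - f z.2| / gK (z.1 - z.2) ^ ((n : ℝ) + s))) ≠ ⊤) :
    (∀ p : ℝ, 1 < p →
      (∫⁻ z : EuclideanSpace ℝ (Fin n) × EuclideanSpace ℝ (Fin n),
          ENNReal.ofReal (|f z.1 - f z.2| ^ p / gK (z.1 - z.2) ^ ((n : ℝ) + s * p)))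
        ≤ ENNReal.ofReal (sSup {r : ℝ | ∃ x y : EuclideanSpace ℝ (Fin n),
              x ≠ y ∧ r = |f x - f y| / gK (x - y) ^ s}) ^ (p - 1) *
            ∫⁻ z : EuclideanSpace ℝ (Fin n) × EuclideanSpace ℝ (Fin n),
              ENNReal.ofReal (|f z.1 - f z.2| / gK (z.1 - z.2) ^ ((n : ℝ) + s))) ∧
    limsup
      (fun p : ℝ =>
        (ENNReal.ofReal (p * (1 - s)) *
            ∫⁻ z : EuclideanSpace ℝ (Fin n) × EuclideanSpace ℝ (Fin n),
              ENNReal.ofReal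
                (|f z.1 - f z.2| ^ p / gK (z.1 - z.2) ^ ((n : ℝ) + s * p))) ^ (1 / p))
      atTop
      ≤ ENNReal.ofReal (sSup {r : ℝ | ∃ x y : EuclideanSpace ℝ (Fin n),
          x ≠ y ∧ r = |f x - f y| / gK (x - y) ^ s}) := by
  have hs0 := hs.1
  have hs1 := hs.2
  set d : ℝ := sSup {r : ℝ | ∃ x y : EuclideanSpace ℝ (Fin n),
      x ≠ y ∧ r = |f x - f y| / gK (x - y) ^ s} with hd_def
  set J : ℝ≥0∞ := ∫⁻ z : EuclideanSpace ℝ (Fin n) × EuclideanSpace ℝ (Fin n),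
      ENNReal.ofReal (|f z.1 - f z.2| / gK (z.1 - z.2) ^ ((n : ℝ) + s)) with hJ_def
  have hgnn : ∀ z : EuclideanSpace ℝ (Fin n), 0 ≤ gK z := fun z =>
    le_trans (by positivity) (hK z).1
  have hgpos : ∀ x y : EuclideanSpace ℝ (Fin n), x ≠ y → 0 < gK (x - y) := by
    intro x y hxy
    have h1 : 0 < ‖x - y‖ := by
      rw [norm_pos_iff]
      exact sub_ne_zero.mpr hxy
    exact lt_of_lt_of_le (by positivity) (hK (x - y)).1
  have hd0 : 0 ≤ d := by
    apply Real.sSup_nonneg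
    rintro r ⟨x, y, hxy, rfl⟩
    exact div_nonneg (abs_nonneg _) (Real.rpow_nonneg (hgnn _) _)
  have hdle : ∀ x y : EuclideanSpace ℝ (Fin n), x ≠ y →
      |f x - f y| / gK (x - y) ^ s ≤ d := fun x y h => le_csSup hbdd ⟨x, y, h, rfl⟩
  -- Part 1
  have part1 : ∀ p : ℝ, 1 < p →
      (∫⁻ z : EuclideanSpace ℝ (Fin n) × EuclideanSpace ℝ (Fin n),
          ENNReal.ofReal (|f z.1 - f z.2| ^ p / gK (z.1 - z.2) ^ ((n : ℝ) + s * p)))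
        ≤ ENNReal.ofReal d ^ (p - 1) * J := by
    intro p hp
    have hp0 : (0:ℝ) < p := by linarith
    have h1 : (0:ℝ) < p - 1 := by linarith
    have hpt : ∀ z : EuclideanSpace ℝ (Fin n) × EuclideanSpace ℝ (Fin n),
        ENNReal.ofReal (|f z.1 - f z.2| ^ p / gK (z.1 - z.2) ^ ((n : ℝ) + s * p))
          ≤ ENNReal.ofReal d ^ (p - 1) *
            ENNReal.ofReal (|f z.1 - f z.2| / gK (z.1 - z.2) ^ ((n : ℝ) + s)) := by
      intro z
      set u : ℝ := |f z.1 - f z.2| with hu_def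
      set g : ℝ := gK (z.1 - z.2) with hg_def
      by_cases hu : u = 0
      · rw [hu, Real.zero_rpow hp0.ne', zero_div, ENNReal.ofReal_zero]
        exact zero_le
      · have hxy : z.1 ≠ z.2 := by
          intro h
          exact hu (by rw [hu_def, h, sub_self, abs_zero])
        have hu' : 0 < u := lt_of_le_of_ne (abs_nonneg _) (Ne.symm hu)
        have hg : 0 < g := hgpos _ _ hxy
        have hxp : u ^ p = u ^ (p - 1) * u := by
          rw [← Real.rpow_add_one hu'.ne' (p - 1)]
          norm_num
        have hgp : g ^ ((n:ℝ) + s * p) = g ^ (s * (p - 1)) * g ^ ((n:ℝ) + s) := by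
          rw [← Real.rpow_add hg]
          congr 1
          ring
        have key : u ^ p / g ^ ((n:ℝ) + s * p)
            = (u / g ^ s) ^ (p - 1) * (u / g ^ ((n:ℝ) + s)) := by
          rw [Real.div_rpow hu'.le (Real.rpow_nonneg hg.le s), ← Real.rpow_mul hg.le,
            hxp, hgp]
          exact (div_mul_div_comm _ _ _ _).symm
        have hle : (u / g ^ s) ^ (p - 1) ≤ d ^ (p - 1) :=
          Real.rpow_le_rpow (div_nonneg hu'.le (Real.rpow_nonneg hg.le s))
            (hdle _ _ hxy) h1.le
        have hreal : u ^ p / g ^ ((n:ℝ) + s * p)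
            ≤ d ^ (p - 1) * (u / g ^ ((n:ℝ) + s)) := by
          rw [key]
          exact mul_le_mul_of_nonneg_right hle
            (div_nonneg hu'.le (Real.rpow_nonneg hg.le _))
        calc ENNReal.ofReal (u ^ p / g ^ ((n:ℝ) + s * p))
            ≤ ENNReal.ofReal (d ^ (p - 1) * (u / g ^ ((n:ℝ) + s))) :=
              ENNReal.ofReal_le_ofReal hreal
          _ = ENNReal.ofReal (d ^ (p - 1)) * ENNReal.ofReal (u / g ^ ((n:ℝ) + s)) :=
              ENNReal.ofReal_mul (Real.rpow_nonneg hd0 _)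
          _ = ENNReal.ofReal d ^ (p - 1) * ENNReal.ofReal (u / g ^ ((n:ℝ) + s)) := by
              rw [ENNReal.ofReal_rpow_of_nonneg hd0 h1.le]
    calc (∫⁻ z : EuclideanSpace ℝ (Fin n) × EuclideanSpace ℝ (Fin n),
          ENNReal.ofReal (|f z.1 - f z.2| ^ p / gK (z.1 - z.2) ^ ((n : ℝ) + s * p)))
        ≤ ∫⁻ z : EuclideanSpace ℝ (Fin n) × EuclideanSpace ℝ (Fin n),
            ENNReal.ofReal d ^ (p - 1) *
              ENNReal.ofReal (|f z.1 - f z.2| / gK (z.1 - z.2) ^ ((n : ℝ) + s)) :=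
          lintegral_mono hpt
      _ = ENNReal.ofReal d ^ (p - 1) * J :=
          lintegral_const_mul' _ _
            (ENNReal.rpow_ne_top_of_nonneg h1.le ENNReal.ofReal_ne_top)
  refine ⟨part1, ?_⟩
  -- Part 2
  have hbound : ∀ p : ℝ, 1 < p →
      (ENNReal.ofReal (p * (1 - s)) *
          ∫⁻ z : EuclideanSpace ℝ (Fin n) × EuclideanSpace ℝ (Fin n),
            ENNReal.ofReal (|f z.1 - f z.2| ^ p / gK (z.1 - z.2) ^ ((n : ℝ) + s * p)))
        ^ (1 / p)
        ≤ (ENNReal.ofReal (p * (1 - s)) * (ENNReal.ofReal d ^ (p - 1) * J)) ^ (1 / p) :=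
    fun p hp => ENNReal.rpow_le_rpow (mul_le_mul_right (part1 p hp) _)
      (one_div_nonneg.mpr (by linarith))
  by_cases hd : d ≤ 0
  · refine le_trans (limsup_le_of_le (by isBoundedDefault) ?_) zero_le
    filter_upwards [eventually_gt_atTop (1:ℝ)] with p hp
    have h := hbound p hp
    rw [ENNReal.ofReal_eq_zero.mpr hd, ENNReal.zero_rpow_of_pos (by linarith),
      zero_mul, mul_zero, ENNReal.zero_rpow_of_pos (one_div_pos.mpr (by linarith))] at h
    exact h
  push_neg at hd
  by_cases hj : J = 0
  · refine le_trans (limsup_le_of_le (by isBoundedDefault) ?_) zero_le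
    filter_upwards [eventually_gt_atTop (1:ℝ)] with p hp
    have h := hbound p hp
    rw [hj, mul_zero, mul_zero, ENNReal.zero_rpow_of_pos (one_div_pos.mpr (by linarith))] at h
    exact h
  · set j : ℝ := J.toReal with hj_def
    have hjpos : 0 < j := ENNReal.toReal_pos hj hJ
    set c₀ : ℝ := (1 - s) * j / d with hc0_def
    have hc0 : 0 < c₀ := div_pos (mul_pos (by linarith) hjpos) hd
    set F : ℝ → ℝ := fun p => p ^ (1/p) * (c₀ ^ (1/p) * d) with hF_def
    have hFt : Tendsto F atTop (nhds d) := by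
      have h1 : Tendsto (fun p : ℝ => p ^ (1/p)) atTop (nhds 1) := tendsto_rpow_div
      have h0 : Tendsto (fun p : ℝ => 1/p) atTop (nhds 0) := by
        simpa using tendsto_inv_atTop_zero (𝕜 := ℝ)
      have h2 : Tendsto (fun p : ℝ => c₀ ^ (1/p)) atTop (nhds 1) := by
        have hcont : ContinuousAt (fun x : ℝ => c₀ ^ x) 0 :=
          Real.continuousAt_const_rpow hc0.ne'
        have := hcont.tendsto.comp h0
        simpa [Real.rpow_zero, Function.comp_def] using this
      have hm := h1.mul (h2.mul (tendsto_const_nhds (x := d) (f := (atTop : Filter ℝ))))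
      simp only [one_mul] at hm
      exact hm
    have heq : ∀ᶠ p : ℝ in atTop,
        (ENNReal.ofReal (p * (1 - s)) * (ENNReal.ofReal d ^ (p - 1) * J)) ^ (1 / p)
          = ENNReal.ofReal (F p) := by
      filter_upwards [eventually_gt_atTop (1:ℝ)] with p hp
      have hp0 : (0:ℝ) < p := by linarith
      have h1 : (0:ℝ) ≤ p - 1 := by linarith
      have hA : (0:ℝ) ≤ p * (1 - s) := by nlinarith
      have hDe : ENNReal.ofReal d ^ (p - 1) = ENNReal.ofReal (d ^ (p - 1)) :=
        ENNReal.ofReal_rpow_of_nonneg hd.le h1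
      have hJe : J = ENNReal.ofReal j := (ENNReal.ofReal_toReal hJ).symm
      rw [hDe, hJe, ← ENNReal.ofReal_mul (Real.rpow_nonneg hd.le _),
        ← ENNReal.ofReal_mul hA,
        ENNReal.ofReal_rpow_of_nonneg (by positivity) (by positivity)]
      congr 1
      have hdp : d ^ (p - 1) = d ^ p / d := by
        rw [Real.rpow_sub hd, Real.rpow_one]
      have hinner : p * (1 - s) * (d ^ (p - 1) * j) = p * (c₀ * d ^ p) := by
        rw [hdp, hc0_def]
        field_simp
      rw [hinner, Real.mul_rpow hp0.le (by positivity),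
        Real.mul_rpow hc0.le (Real.rpow_nonneg hd.le p),
        ← Real.rpow_mul hd.le, mul_one_div_cancel hp0.ne', Real.rpow_one]
    have hev : ∀ᶠ p : ℝ in atTop,
        (ENNReal.ofReal (p * (1 - s)) *
            ∫⁻ z : EuclideanSpace ℝ (Fin n) × EuclideanSpace ℝ (Fin n),
              ENNReal.ofReal
                (|f z.1 - f z.2| ^ p / gK (z.1 - z.2) ^ ((n : ℝ) + s * p))) ^ (1 / p)
          ≤ ENNReal.ofReal (F p) := by
      filter_upwards [eventually_gt_atTop (1:ℝ), heq] with p hp hpe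
      exact (hbound p hp).trans_eq hpe
    calc limsup _ atTop ≤ limsup (fun p => ENNReal.ofReal (F p)) atTop :=
          limsup_le_limsup hev
      _ = ENNReal.ofReal d :=
          ((ENNReal.continuous_ofReal.tendsto d).comp hFt).limsup_eq
end
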